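/- If k ≥ 3 and n ≥ k + 3, then there exist linear functionals l_1, …, l_n : ℂ^k → ℂ, every k of which are linearly independent, such that the associated discriminantal arrangement B(n, k) admits a codimension-2 stratum of multiplicity 3, i.e. there exist three pairwise distinct (k+1)-element subsets K_1, K_2, K_3 of {1, …, n} with |K_1 ∪ K_2 ∪ K_3| ≥ k + 3 such that D_{K_1} ∩ D_{K_2} ∩ D_{K_3} has codimension 2 in ℂ^n. -/

import Mathlib

open Module Submodule

/-- The subspace `D_J ⊆ ℂ^ι` of translation vectors `x` for which the translated
hyperplanes `{l i = x i}`, `i ∈ J`, have a common point. -/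
noncomputable def DD {ι V : Type*} [AddCommGroup V] [Module ℂ V]
    (l : ι → Module.Dual ℂ V) (J : Finset ι) : Submodule ℂ (ι → ℂ) where
  carrier := {x | ∃ y : V, ∀ i ∈ J, x i = l i y}
  add_mem' := by
    rintro a b ⟨y, hy⟩ ⟨z, hz⟩
    exact ⟨y + z, fun i hi => by simp [hy i hi, hz i hi]⟩
  zero_mem' := ⟨0, fun i _ => by simp⟩
  smul_mem' := by
    rintro c a ⟨y, hy⟩
    exact ⟨c • y, fun i hi => by simp [hy i hi]⟩


/-! ### Auxiliary machinery -/

open Polynomial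
lemma coeff_basis_top {ι : Type*} [DecidableEq ι] (s : Finset ι) (v : ι → ℂ)
    (hv : Set.InjOn v s) {i : ι} (hi : i ∈ s) :
    (Lagrange.basis s v i).coeff (s.card - 1) = ∏ j ∈ s.erase i, (v i - v j)⁻¹ := by
  have hnd := Lagrange.natDegree_basis hv hi
  rw [← hnd, Polynomial.coeff_natDegree, Lagrange.basis, Polynomial.leadingCoeff_prod]
  refine Finset.prod_congr rfl fun j hj => ?_
  rcases Finset.mem_erase.mp hj with ⟨hij, hj'⟩
  have hne : v i ≠ v j := fun h => hij.symm (hv hi hj' h)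
  rw [Lagrange.basisDivisor, leadingCoeff_mul, leadingCoeff_C,
    (monic_X_sub_C (v j)).leadingCoeff, mul_one]

lemma key_sum {ι : Type*} [DecidableEq ι] (s : Finset ι) (v : ι → ℂ) (hv : Set.InjOn v s)
    (f : ℂ[X]) (hf : f.degree < ((s.card - 1 : ℕ) : WithBot ℕ)) :
    ∑ i ∈ s, f.eval (v i) * ∏ j ∈ s.erase i, (v i - v j)⁻¹ = 0 := by
  have hlt : f.degree < (s.card : WithBot ℕ) :=
    lt_of_lt_of_le hf (Nat.cast_le.mpr (Nat.sub_le _ _))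
  have h1 := Lagrange.eq_interpolate hv hlt
  have h2 := congrArg (fun p : ℂ[X] => p.coeff (s.card - 1)) h1
  simp only [Lagrange.interpolate_apply, Polynomial.finset_sum_coeff,
    Polynomial.coeff_C_mul] at h2
  rw [Polynomial.coeff_eq_zero_of_degree_lt hf] at h2
  refine (Finset.sum_congr rfl fun i hi => ?_).trans h2.symm
  rw [coeff_basis_top s v hv hi]

/-- the functional `x ↦ ∑ i, r i * x i` -/
noncomputable def lform {n : ℕ} (r : Fin n → ℂ) : (Fin n → ℂ) →ₗ[ℂ] ℂ :=
  ∑ i, r i • LinearMap.proj i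

lemma lform_apply {n : ℕ} (r x : Fin n → ℂ) : lform r x = ∑ i, r i * x i := by
  simp [lform]

lemma vand_li {k n : ℕ} (t : Fin n → ℂ) (ht : Function.Injective t)
    (S : Finset (Fin n)) (hS : S.card = k) :
    LinearIndependent ℂ (fun i : S => (fun p : Fin k => t i.1 ^ (p : ℕ))) := by
  have e : (S : Type) ≃ Fin k := S.equivFin.trans (finCongr hS)
  have hM : LinearIndependent ℂ
      (fun q : Fin k => Matrix.vandermonde (fun q : Fin k => t (e.symm q).1) q) := by
    refine (Matrix.linearIndependent_rows_iff_isUnit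
      (A := Matrix.vandermonde (fun q : Fin k => t (e.symm q).1))).mpr ?_
    rw [Matrix.isUnit_iff_isUnit_det,
      isUnit_iff_ne_zero, Matrix.det_vandermonde_ne_zero_iff]
    exact ht.comp (Subtype.val_injective.comp e.symm.injective)
  have h2 := hM.comp e e.injective
  have h3 : (fun i : S => (fun p : Fin k => t i.1 ^ (p : ℕ))) =
      (fun q : Fin k => Matrix.vandermonde (fun q : Fin k => t (e.symm q).1) q) ∘ e := by
    funext i p
    simp [Matrix.vandermonde]
  rw [h3]
  exact h2

lemma DD_eq_ker {k n : ℕ} (hk : 0 < k) (l : Fin n → Module.Dual ℂ (Fin k → ℂ))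
    (hgen : ∀ S : Finset (Fin n), S.card = k → LinearIndependent ℂ (fun i : S => l i.1))
    (K : Finset (Fin n)) (hK : K.card = k + 1)
    (r : Fin n → ℂ) (hsupp : ∀ i, i ∉ K → r i = 0)
    (i₀ : Fin n) (hi₀ : i₀ ∈ K) (hr₀ : r i₀ ≠ 0)
    (hrel : ∑ i ∈ K, r i • l i = 0) :
    DD l K = LinearMap.ker (lform r) := by
  ext x
  have hsumK : (∑ i : Fin n, r i * x i) = ∑ i ∈ K, r i * x i :=
    (Finset.sum_subset (Finset.subset_univ K) (fun i _ hi => by simp [hsupp i hi])).symm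
  constructor
  · rintro ⟨y, hy⟩
    simp only [LinearMap.mem_ker, lform_apply]
    rw [hsumK]
    have h2 : ∑ i ∈ K, r i * (l i y) = 0 := by
      simpa using LinearMap.congr_fun hrel y
    calc ∑ i ∈ K, r i * x i = ∑ i ∈ K, r i * (l i y) :=
          Finset.sum_congr rfl fun i hi => by rw [hy i hi]
      _ = 0 := h2
  · intro hx
    simp only [LinearMap.mem_ker, lform_apply] at hx
    set K' : Finset (Fin n) := K.erase i₀ with hK'def
    have hK' : K'.card = k := by
      rw [hK'def, Finset.card_erase_of_mem hi₀, hK]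
      omega
    have hli := hgen K' hK'
    haveI : Nonempty (K' : Type) := by
      rw [Finset.nonempty_coe_sort, ← Finset.card_pos, hK']
      exact hk
    have hcard : Fintype.card (K' : Type) = finrank ℂ (Module.Dual ℂ (Fin k → ℂ)) := by
      rw [Subspace.dual_finrank_eq]
      simp [hK']
    let B := basisOfLinearIndependentOfCardEqFinrank hli hcard
    have hB : ∀ i : (K' : Type), B i = l i.1 := fun i => by
      simp [B, coe_basisOfLinearIndependentOfCardEqFinrank]
    set ψ : Module.Dual ℂ (Module.Dual ℂ (Fin k → ℂ)) :=
      B.constr ℂ (fun i : (K' : Type) => x i.1) with hψ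
    set y : Fin k → ℂ := (Module.evalEquiv ℂ (Fin k → ℂ)).symm ψ with hy
    have hval : ∀ i ∈ K', x i = l i y := by
      intro i hi
      have h1 : l i y = ψ (l i) := Module.apply_evalEquiv_symm_apply ℂ (Fin k → ℂ) (l i) ψ
      rw [h1, ← hB ⟨i, hi⟩, hψ, Basis.constr_basis]
    have hsum0 : ∑ i ∈ K, r i * x i = 0 := by rw [← hsumK]; exact hx
    have hrely : ∑ i ∈ K, r i * (l i y) = 0 := by
      simpa using LinearMap.congr_fun hrel y
    have hKsplit : ∀ g : Fin n → ℂ, ∑ i ∈ K, g i = g i₀ + ∑ i ∈ K', g i := by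
      intro g
      rw [hK'def, Finset.add_sum_erase _ _ hi₀]
    rw [hKsplit] at hrely hsum0
    have e3 : ∑ i ∈ K', r i * (l i y) = ∑ i ∈ K', r i * x i :=
      Finset.sum_congr rfl fun i hi => by rw [← hval i hi]
    rw [e3] at hrely
    have h0 : r i₀ * (l i₀ y) = r i₀ * x i₀ := by
      have := hrely.trans hsum0.symm
      exact add_right_cancel this
    have h0' : l i₀ y = x i₀ := mul_left_cancel₀ hr₀ h0
    exact ⟨y, fun i hi => by
      rcases eq_or_ne i i₀ with rfl | hne
      · exact h0'.symm
      · exact hval i (Finset.mem_erase.mpr ⟨hne, hi⟩)⟩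

lemma lform_single {n : ℕ} (r : Fin n → ℂ) (j : Fin n) : lform r (Pi.single j 1) = r j := by
  simp [lform_apply, Pi.single_apply, Finset.sum_ite_eq']

lemma rank_two {n : ℕ} (r₁ r₂ r₃ : Fin n → ℂ) (a b : Fin n)
    (h1a : r₁ a = 0) (h2a : r₂ a ≠ 0) (h1b : r₁ b ≠ 0) (h2b : r₂ b = 0)
    (hsum : ∀ i, r₁ i + r₂ i + r₃ i = 0) :
    finrank ℂ ↥(LinearMap.ker (lform r₁) ⊓ LinearMap.ker (lform r₂) ⊓ LinearMap.ker (lform r₃))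
      = n - 2 := by
  have hker3 : LinearMap.ker (lform r₁) ⊓ LinearMap.ker (lform r₂) ≤ LinearMap.ker (lform r₃) := by
    rintro x ⟨hx1, hx2⟩
    simp only [SetLike.mem_coe, LinearMap.mem_ker, lform_apply] at hx1 hx2 ⊢
    have h3 : ∀ i, r₃ i * x i = -(r₁ i * x i) - r₂ i * x i := fun i => by
      linear_combination (x i) * hsum i
    rw [Finset.sum_congr rfl fun i _ => h3 i, Finset.sum_sub_distrib, Finset.sum_neg_distrib,
      hx1, hx2]
    ring
  have heq : LinearMap.ker (lform r₁) ⊓ LinearMap.ker (lform r₂) ⊓ LinearMap.ker (lform r₃)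
      = LinearMap.ker (lform r₁) ⊓ LinearMap.ker (lform r₂) := inf_eq_left.mpr hker3
  rw [heq]
  set L : (Fin n → ℂ) →ₗ[ℂ] ℂ × ℂ := (lform r₁).prod (lform r₂) with hL
  have hkerL : LinearMap.ker L = LinearMap.ker (lform r₁) ⊓ LinearMap.ker (lform r₂) :=
    LinearMap.ker_prod _ _
  have hsurj : Function.Surjective L := by
    rintro ⟨c, d⟩
    refine ⟨(c * (r₁ b)⁻¹) • (Pi.single b 1 : Fin n → ℂ) + (d * (r₂ a)⁻¹) • (Pi.single a 1 : Fin n → ℂ), ?_⟩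
    have e1 : lform r₁ ((c * (r₁ b)⁻¹) • (Pi.single b 1 : Fin n → ℂ) + (d * (r₂ a)⁻¹) • (Pi.single a 1 : Fin n → ℂ)) = c := by
      rw [map_add, map_smul, map_smul, lform_single, lform_single, h1a]
      simp only [smul_eq_mul, mul_zero, add_zero, zero_add]
      field_simp
    have e2 : lform r₂ ((c * (r₁ b)⁻¹) • (Pi.single b 1 : Fin n → ℂ) + (d * (r₂ a)⁻¹) • (Pi.single a 1 : Fin n → ℂ)) = d := by
      rw [map_add, map_smul, map_smul, lform_single, lform_single, h2b]
      simp only [smul_eq_mul, mul_zero, add_zero, zero_add]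
      field_simp
    simp [hL, LinearMap.prod_apply, e1, e2]
  have hrank := L.finrank_range_add_finrank_ker
  rw [LinearMap.range_eq_top.mpr hsurj] at hrank
  simp only [finrank_top] at hrank
  have h2 : finrank ℂ (ℂ × ℂ) = 2 := by simp
  have hn : finrank ℂ (Fin n → ℂ) = n := by simp
  rw [h2, hn] at hrank
  rw [← hkerL]
  omega


def uu (m : ℕ) : ℕ :=
  if m = 0 then 3 else if m = 1 then 5 else if m = 2 then 2 else if m = 3 then 6
  else if m = 4 then 1 else if m = 5 then 7 else m + 2

lemma uu_inj : Function.Injective uu := by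
  intro a b h
  unfold uu at h
  split_ifs at h <;> omega

noncomputable def tt (n : ℕ) : Fin n → ℂ := fun i => (uu i.1 : ℂ)

lemma tt_inj (n : ℕ) : Function.Injective (tt n) := fun a b h =>
  Fin.val_injective (uu_inj (Nat.cast_injective h))

def SS (k n : ℕ) : Finset (Fin n) := Finset.univ.filter (fun i => i.1 < k + 3)

lemma mem_SS {k n : ℕ} {i : Fin n} : i ∈ SS k n ↔ i.1 < k + 3 := by simp [SS]

lemma SS_card {k n : ℕ} (hn : k + 3 ≤ n) : (SS k n).card = k + 3 := by
  have h : SS k n = Finset.map (Fin.castLEEmb hn) Finset.univ := by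
    ext i
    simp only [mem_SS, Finset.mem_map, Finset.mem_univ, true_and, Fin.castLEEmb_apply]
    constructor
    · intro hi
      exact ⟨⟨i.1, hi⟩, rfl⟩
    · rintro ⟨m, rfl⟩
      exact m.2
  rw [h, Finset.card_map, Finset.card_univ, Fintype.card_fin]

noncomputable def dd (k n : ℕ) : Fin n → ℂ :=
  fun i => ∏ j ∈ (SS k n).erase i, (tt n i - tt n j)⁻¹

lemma dd_ne {k n : ℕ} (i : Fin n) : dd k n i ≠ 0 := by
  refine Finset.prod_ne_zero_iff.mpr fun j hj => ?_
  have hji : j ≠ i := (Finset.mem_erase.mp hj).1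
  exact inv_ne_zero (sub_ne_zero_of_ne fun h => hji ((tt_inj n h).symm))

def KK (k n a b : ℕ) : Finset (Fin n) := (SS k n).filter (fun i => i.1 ≠ a ∧ i.1 ≠ b)

lemma mem_KK {k n a b : ℕ} {i : Fin n} :
    i ∈ KK k n a b ↔ i.1 < k + 3 ∧ i.1 ≠ a ∧ i.1 ≠ b := by simp [KK, mem_SS]

lemma KK_card {k n a b : ℕ} (hn : k + 3 ≤ n) (ha : a < k + 3) (hb : b < k + 3) (hab : a ≠ b) :
    (KK k n a b).card = k + 1 := by
  have han : a < n := lt_of_lt_of_le ha hn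
  have hbn : b < n := lt_of_lt_of_le hb hn
  have h : KK k n a b = SS k n \ {(⟨a, han⟩ : Fin n), ⟨b, hbn⟩} := by
    ext i
    simp only [mem_KK, Finset.mem_sdiff, mem_SS, Finset.mem_insert, Finset.mem_singleton,
      Fin.ext_iff]
    tauto
  have hsub : {(⟨a, han⟩ : Fin n), ⟨b, hbn⟩} ⊆ SS k n := by
    intro i hi
    simp only [Finset.mem_insert, Finset.mem_singleton] at hi
    rcases hi with rfl | rfl <;> simp [mem_SS, ha, hb]
  rw [h, Finset.card_sdiff_of_subset hsub, SS_card hn, Finset.card_pair (by simp [Fin.ext_iff, hab])]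
  omega

noncomputable def rr (k n : ℕ) (c α β : ℂ) : Fin n → ℂ :=
  fun i => if i.1 < k + 3 then c * ((tt n i - α) * (tt n i - β)) * dd k n i else 0

lemma sum_rr_pow {k n : ℕ} (hn : k + 3 ≤ n) (c α β : ℂ) (p : ℕ) (hp : p < k) :
    ∑ i ∈ SS k n, c * ((tt n i - α) * (tt n i - β)) * dd k n i * tt n i ^ p = 0 := by
  have hf : (C c * ((X - C α) * (X - C β)) * X ^ p : ℂ[X]).natDegree ≤ p + 2 := by
    compute_degree
    omega
  have hdeg : (C c * ((X - C α) * (X - C β)) * X ^ p : ℂ[X]).degree <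
      (((SS k n).card - 1 : ℕ) : WithBot ℕ) := by
    rw [SS_card hn]
    refine lt_of_le_of_lt (degree_le_natDegree) ?_
    have h1 : ((C c * ((X - C α) * (X - C β)) * X ^ p : ℂ[X]).natDegree : WithBot ℕ)
        ≤ ((p + 2 : ℕ) : WithBot ℕ) := Nat.cast_le.mpr hf
    exact lt_of_le_of_lt h1 (Nat.cast_lt.mpr (by omega))
  have h := key_sum (SS k n) (tt n) ((tt_inj n).injOn) _ hdeg
  rw [← h]
  refine Finset.sum_congr rfl fun i hi => ?_
  simp only [dd, eval_mul, eval_pow, eval_sub, eval_C, eval_X]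
  ring

lemma rr_supp {k n : ℕ} (c α β : ℂ) (a b : ℕ)
    (hα : (uu a : ℂ) = α) (hβ : (uu b : ℂ) = β) :
    ∀ i, i ∉ KK k n a b → rr k n c α β i = 0 := by
  intro i hiK
  unfold rr
  by_cases hiS : i.1 < k + 3
  · rw [if_pos hiS]
    have h1 : i.1 = a ∨ i.1 = b := by
      by_contra hc
      push_neg at hc
      exact hiK (mem_KK.mpr ⟨hiS, hc⟩)
    rcases h1 with h | h
    · have hti : tt n i = α := by rw [← hα]; unfold tt; rw [h]
      rw [hti]; ring
    · have hti : tt n i = β := by rw [← hβ]; unfold tt; rw [h]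
      rw [hti]; ring
  · rw [if_neg hiS]

lemma rel_rr {k n : ℕ} (hn : k + 3 ≤ n) (c α β : ℂ) (a b : ℕ)
    (hα : (uu a : ℂ) = α) (hβ : (uu b : ℂ) = β) :
    ∑ i ∈ KK k n a b, rr k n c α β i • (fun p : Fin k => tt n i ^ (p : ℕ)) = 0 := by
  have hext : ∑ i ∈ KK k n a b, rr k n c α β i • (fun p : Fin k => tt n i ^ (p : ℕ))
      = ∑ i ∈ SS k n, rr k n c α β i • (fun p : Fin k => tt n i ^ (p : ℕ)) := by
    apply Finset.sum_subset
    · intro i hi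
      exact mem_SS.mpr (mem_KK.mp hi).1
    · intro i hiS hiK
      rw [rr_supp c α β a b hα hβ i hiK, zero_smul]
  rw [hext]
  funext p
  rw [Finset.sum_apply]
  simp only [Pi.smul_apply, smul_eq_mul, Pi.zero_apply]
  have h := sum_rr_pow hn c α β (p : ℕ) p.2
  rw [← h]
  refine Finset.sum_congr rfl fun i hi => ?_
  unfold rr
  rw [if_pos (mem_SS.mp hi)]

/-- Corollary `inequality`: for `k ≥ 3` and `n ≥ k + 3` there exists a generic
arrangement (every `k` of the functionals linearly independent) whose discriminantal
arrangement `B(n, k)` admits a codimension-2 stratum of multiplicity 3. -/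
theorem stmt5 (k n : ℕ) (hk : 3 ≤ k) (hn : k + 3 ≤ n) :
    ∃ l : Fin n → Module.Dual ℂ (Fin k → ℂ),
      (∀ S : Finset (Fin n), S.card = k → LinearIndependent ℂ (fun i : S => l i.1)) ∧
      ∃ K₁ K₂ K₃ : Finset (Fin n),
        K₁ ≠ K₂ ∧ K₁ ≠ K₃ ∧ K₂ ≠ K₃ ∧
        K₁.card = k + 1 ∧ K₂.card = k + 1 ∧ K₃.card = k + 1 ∧
        k + 3 ≤ (K₁ ∪ K₂ ∪ K₃).card ∧
        Module.finrank ℂ ↥(DD l K₁ ⊓ DD l K₂ ⊓ DD l K₃) = n - 2 := by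
  have hk0 : 0 < k := by omega
  set E := (Pi.basisFun ℂ (Fin k)).toDualEquiv with hE
  set aa : Fin n → (Fin k → ℂ) := fun i => fun p => tt n i ^ (p : ℕ) with haa
  set l : Fin n → Module.Dual ℂ (Fin k → ℂ) := fun i => E (aa i) with hl
  have hgen : ∀ S : Finset (Fin n), S.card = k → LinearIndependent ℂ (fun i : S => l i.1) := by
    intro S hS
    have h := vand_li (tt n) (tt_inj n) S hS
    exact h.map' E.toLinearMap E.ker
  -- index elements
  have h0n : (0 : ℕ) < n := by omega
  have h2n : (2 : ℕ) < n := by omega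
  set i0 : Fin n := ⟨0, h0n⟩ with hi0def
  set i2 : Fin n := ⟨2, h2n⟩ with hi2def
  have hv0 : i0.1 = 0 := rfl
  have hv2 : i2.1 = 2 := rfl
  have ht0 : tt n i0 = 3 := by show ((uu 0 : ℕ) : ℂ) = 3; norm_num [uu]
  have ht2 : tt n i2 = 2 := by show ((uu 2 : ℕ) : ℂ) = 2; norm_num [uu]
  -- the three subsets and relation vectors
  set K₁ : Finset (Fin n) := KK k n 0 1 with hK₁
  set K₂ : Finset (Fin n) := KK k n 2 3 with hK₂
  set K₃ : Finset (Fin n) := KK k n 4 5 with hK₃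
  set r₁ : Fin n → ℂ := rr k n 5 3 5 with hr₁
  set r₂ : Fin n → ℂ := rr k n (-8) 2 6 with hr₂
  set r₃ : Fin n → ℂ := rr k n 3 1 7 with hr₃
  have hcard₁ : K₁.card = k + 1 := KK_card hn (by omega) (by omega) (by omega)
  have hcard₂ : K₂.card = k + 1 := KK_card hn (by omega) (by omega) (by omega)
  have hcard₃ : K₃.card = k + 1 := KK_card hn (by omega) (by omega) (by omega)
  -- memberships
  have hmem0K2 : i0 ∈ K₂ := mem_KK.mpr ⟨by simp only [hv0]; omega, by simp only [hv0]; omega,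
    by simp only [hv0]; omega⟩
  have hmem0K3 : i0 ∈ K₃ := mem_KK.mpr ⟨by simp only [hv0]; omega, by simp only [hv0]; omega,
    by simp only [hv0]; omega⟩
  have hmem0K1 : i0 ∉ K₁ := fun h => by
    have := (mem_KK.mp h).2.1
    simp only [hv0] at this
    exact this rfl
  have hmem2K1 : i2 ∈ K₁ := mem_KK.mpr ⟨by simp only [hv2]; omega, by simp only [hv2]; omega,
    by simp only [hv2]; omega⟩
  have hmem2K2 : i2 ∉ K₂ := fun h => by
    have := (mem_KK.mp h).2.1
    simp only [hv2] at this
    exact this rfl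
  -- distinctness
  have hne12 : K₁ ≠ K₂ := fun h => hmem0K1 (h ▸ hmem0K2)
  have hne13 : K₁ ≠ K₃ := fun h => hmem0K1 (h ▸ hmem0K3)
  have hne23 : K₂ ≠ K₃ := fun h => hmem2K2 (h ▸ mem_KK.mpr ⟨by simp only [hv2]; omega, by simp only [hv2]; omega,
    by simp only [hv2]; omega⟩)
  -- union
  have hunion : k + 3 ≤ (K₁ ∪ K₂ ∪ K₃).card := by
    have hU : SS k n ⊆ K₁ ∪ K₂ ∪ K₃ := by
      intro i hi
      have hiv := mem_SS.mp hi
      by_cases h01 : i.1 = 0 ∨ i.1 = 1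
      · exact Finset.mem_union_left _ (Finset.mem_union_right _
          (mem_KK.mpr ⟨hiv, by omega, by omega⟩))
      · push_neg at h01
        exact Finset.mem_union_left _ (Finset.mem_union_left _
          (mem_KK.mpr ⟨hiv, h01.1, h01.2⟩))
    calc k + 3 = (SS k n).card := (SS_card hn).symm
      _ ≤ (K₁ ∪ K₂ ∪ K₃).card := Finset.card_le_card hU
  -- nonvanishing values
  have hdd0 := dd_ne (k := k) (n := n) i0
  have hdd2 := dd_ne (k := k) (n := n) i2
  have hr₁0 : r₁ i0 = 0 := by
    rw [hr₁]; unfold rr; rw [if_pos (by simp only [hv0]; omega : i0.1 < k + 3), ht0]; ring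
  have hr₂0 : r₂ i0 ≠ 0 := by
    rw [hr₂]; unfold rr; rw [if_pos (by simp only [hv0]; omega : i0.1 < k + 3), ht0]
    intro h
    apply hdd0
    have h24 : ((-8 : ℂ) * ((3 - 2) * (3 - 6))) = 24 := by norm_num
    rw [h24] at h
    simpa using h
  have hr₁2 : r₁ i2 ≠ 0 := by
    rw [hr₁]; unfold rr; rw [if_pos (by simp only [hv2]; omega : i2.1 < k + 3), ht2]
    intro h
    apply hdd2
    have h15 : ((5 : ℂ) * ((2 - 3) * (2 - 5))) = 15 := by norm_num
    rw [h15] at h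
    simpa using h
  have hr₂2 : r₂ i2 = 0 := by
    rw [hr₂]; unfold rr; rw [if_pos (by simp only [hv2]; omega : i2.1 < k + 3), ht2]; ring
  have hr₃0 : r₃ i0 ≠ 0 := by
    rw [hr₃]; unfold rr; rw [if_pos (by simp only [hv0]; omega : i0.1 < k + 3), ht0]
    intro h
    apply hdd0
    have h24 : ((3 : ℂ) * ((3 - 1) * (3 - 7))) = -24 := by norm_num
    rw [h24] at h
    have := mul_eq_zero.mp h
    rcases this with h' | h'
    · norm_num at h'
    · exact h'
  -- pointwise sum of the three relation vectors vanishes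
  have hsum : ∀ i, r₁ i + r₂ i + r₃ i = 0 := by
    intro i
    rw [hr₁, hr₂, hr₃]; unfold rr
    by_cases h : i.1 < k + 3
    · simp only [if_pos h]; ring
    · simp only [if_neg h]; ring
  -- relations in the dual
  have hrelgen : ∀ (c α β : ℂ) (a b : ℕ), (uu a : ℂ) = α → (uu b : ℂ) = β →
      ∑ i ∈ KK k n a b, rr k n c α β i • l i = 0 := by
    intro c α β a b hα hβ
    have h := rel_rr (k := k) hn c α β a b hα hβ
    calc ∑ i ∈ KK k n a b, rr k n c α β i • l i
        = E (∑ i ∈ KK k n a b, rr k n c α β i • aa i) := by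
          rw [map_sum]
          exact Finset.sum_congr rfl fun i _ => (E.map_smul _ _).symm
      _ = E 0 := by rw [← h]
      _ = 0 := map_zero E
  have hrel₁ : ∑ i ∈ K₁, r₁ i • l i = 0 :=
    hrelgen 5 3 5 0 1 (by norm_num [uu]) (by norm_num [uu])
  have hrel₂ : ∑ i ∈ K₂, r₂ i • l i = 0 :=
    hrelgen (-8) 2 6 2 3 (by norm_num [uu]) (by norm_num [uu])
  have hrel₃ : ∑ i ∈ K₃, r₃ i • l i = 0 :=
    hrelgen 3 1 7 4 5 (by norm_num [uu]) (by norm_num [uu])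
  -- kernels
  have hDD₁ : DD l K₁ = LinearMap.ker (lform r₁) :=
    DD_eq_ker hk0 l hgen K₁ hcard₁ r₁ (rr_supp 5 3 5 0 1 (by norm_num [uu]) (by norm_num [uu]))
      i2 hmem2K1 hr₁2 hrel₁
  have hDD₂ : DD l K₂ = LinearMap.ker (lform r₂) :=
    DD_eq_ker hk0 l hgen K₂ hcard₂ r₂ (rr_supp (-8) 2 6 2 3 (by norm_num [uu]) (by norm_num [uu]))
      i0 hmem0K2 hr₂0 hrel₂
  have hDD₃ : DD l K₃ = LinearMap.ker (lform r₃) :=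
    DD_eq_ker hk0 l hgen K₃ hcard₃ r₃ (rr_supp 3 1 7 4 5 (by norm_num [uu]) (by norm_num [uu]))
      i0 hmem0K3 hr₃0 hrel₃
  refine ⟨l, hgen, K₁, K₂, K₃, hne12, hne13, hne23, hcard₁, hcard₂, hcard₃, hunion, ?_⟩
  rw [hDD₁, hDD₂, hDD₃]
  exact rank_two r₁ r₂ r₃ i0 i2 hr₁0 hr₂0 hr₁2 hr₂2 hsum
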